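/- For every nonnegative integer n, ∫_{-1/2}^{3/2} (3x² - 2x³)ⁿ dx = 2 ∫_{0}^{1} (3x² - 2x³)ⁿ dx. -/

import Mathlib

open Real Set intervalIntegral

theorem ruehr_monomial (n : ℕ) :
    ∫ x in (-1/2 : ℝ)..(3/2 : ℝ), (3 * x ^ 2 - 2 * x ^ 3) ^ n =
      2 * ∫ x in (0 : ℝ)..(1 : ℝ), (3 * x ^ 2 - 2 * x ^ 3) ^ n := by
  set F : ℝ → ℝ := fun x => (3 * x ^ 2 - 2 * x ^ 3) ^ n with hF
  have hFc : Continuous F := by fun_prop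
  set s : ℝ → ℝ := fun t => Real.sqrt (9 + 12 * t - 12 * t ^ 2) with hsdef
  -- basic facts about s on [0,1]
  have harg : ∀ t ∈ uIcc (0:ℝ) 1, (9:ℝ) ≤ 9 + 12 * t - 12 * t ^ 2 := by
    intro t ht
    rw [uIcc_of_le (by norm_num)] at ht
    nlinarith [ht.1, ht.2]
  have hs3 : ∀ t ∈ uIcc (0:ℝ) 1, (3:ℝ) ≤ s t := by
    intro t ht
    have := harg t ht
    have : Real.sqrt 9 ≤ s t := Real.sqrt_le_sqrt this
    rwa [show (9:ℝ) = 3 ^ 2 by norm_num, Real.sqrt_sq (by norm_num)] at this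
  have hssq : ∀ t ∈ uIcc (0:ℝ) 1, (s t) ^ 2 = 9 + 12 * t - 12 * t ^ 2 := by
    intro t ht
    exact Real.sq_sqrt (by linarith [harg t ht])
  -- derivative of s
  have hsderiv : ∀ t ∈ uIcc (0:ℝ) 1,
      HasDerivAt s ((12 - 24 * t) / (2 * s t)) t := by
    intro t ht
    have h1 : HasDerivAt (fun t : ℝ => 9 + 12 * t - 12 * t ^ 2) (12 - 24 * t) t := by
      have := ((hasDerivAt_id t).const_mul (12:ℝ)).const_add 9
      have h2 := ((hasDerivAt_pow 2 t).const_mul (12:ℝ))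
      have h3 := this.sub h2
      exact h3.congr_deriv (by norm_num; ring)
    have hne : (9 + 12 * t - 12 * t ^ 2) ≠ 0 := by linarith [harg t ht]
    simpa using h1.sqrt hne
  -- the two auxiliary substitution maps
  set gm : ℝ → ℝ := fun t => (3 - 2 * t - s t) / 4 with hgm
  set gp : ℝ → ℝ := fun t => (3 - 2 * t + s t) / 4 with hgp
  set dm : ℝ → ℝ := fun t => (-2 - (12 - 24 * t) / (2 * s t)) / 4 with hdm
  set dp : ℝ → ℝ := fun t => (-2 + (12 - 24 * t) / (2 * s t)) / 4 with hdp
  have hgmderiv : ∀ t ∈ uIcc (0:ℝ) 1, HasDerivAt gm (dm t) t := by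
    intro t ht
    have := (((hasDerivAt_id t).const_mul (2:ℝ)).const_sub 3).sub (hsderiv t ht)
    simpa [hgm, hdm, sub_div] using this.div_const 4
  have hgpderiv : ∀ t ∈ uIcc (0:ℝ) 1, HasDerivAt gp (dp t) t := by
    intro t ht
    have := (((hasDerivAt_id t).const_mul (2:ℝ)).const_sub 3).add (hsderiv t ht)
    simpa [hgp, hdp, sub_eq_add_neg, add_div] using this.div_const 4
  have hscont : ContinuousOn s (uIcc (0:ℝ) 1) :=
    fun t ht => ((hsderiv t ht).continuousAt).continuousWithinAt
  have hsne : ∀ t ∈ uIcc (0:ℝ) 1, s t ≠ 0 := fun t ht => by linarith [hs3 t ht]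
  have hdmcont : ContinuousOn dm (uIcc (0:ℝ) 1) := by
    apply ContinuousOn.div_const
    apply ContinuousOn.sub continuousOn_const
    exact ContinuousOn.div (by fun_prop) (continuousOn_const.mul hscont)
      (fun t ht => by have := hs3 t ht; positivity)
  have hdpcont : ContinuousOn dp (uIcc (0:ℝ) 1) := by
    apply ContinuousOn.div_const
    apply ContinuousOn.add continuousOn_const
    exact ContinuousOn.div (by fun_prop) (continuousOn_const.mul hscont)
      (fun t ht => by have := hs3 t ht; positivity)
  -- key algebraic identity: F ∘ gm = F and F ∘ gp = F on [0,1]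
  have hkey : ∀ t ∈ uIcc (0:ℝ) 1, F (gm t) = F t ∧ F (gp t) = F t := by
    intro t ht
    have hsq := hssq t ht
    constructor
    · simp only [hF, hgm]
      congr 1
      linear_combination ((6 * t - 3 + s t) / 32) * hsq
    · simp only [hF, hgp]
      congr 1
      linear_combination ((6 * t - 3 - s t) / 32) * hsq
  -- endpoint values
  have hs0 : s 0 = 3 := by
    simp only [hsdef]
    norm_num
  have hs1 : s 1 = 3 := by
    simp only [hsdef]
    norm_num
  have hgm0 : gm 0 = 0 := by simp [hgm, hs0]
  have hgm1 : gm 1 = -(1/2) := by simp only [hgm]; rw [hs1]; norm_num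
  have hgp0 : gp 0 = 3/2 := by simp only [hgp]; rw [hs0]; norm_num
  have hgp1 : gp 1 = 1 := by simp only [hgp]; rw [hs1]; norm_num
  -- substitution for gm
  have hsubm := integral_comp_smul_deriv hgmderiv hdmcont hFc
  rw [hgm0, hgm1] at hsubm
  have hsubp := integral_comp_smul_deriv hgpderiv hdpcont hFc
  rw [hgp0, hgp1] at hsubp
  -- rewrite integrands using the key identity
  have hintm : (∫ t in (0:ℝ)..1, dm t • (F ∘ gm) t) = ∫ t in (0:ℝ)..1, dm t * F t := by
    apply integral_congr
    intro t ht
    simp [Function.comp, (hkey t ht).1, smul_eq_mul]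
  have hintp : (∫ t in (0:ℝ)..1, dp t • (F ∘ gp) t) = ∫ t in (0:ℝ)..1, dp t * F t := by
    apply integral_congr
    intro t ht
    simp [Function.comp, (hkey t ht).2, smul_eq_mul]
  -- integrability
  have hFi : ∀ a b : ℝ, IntervalIntegrable F MeasureTheory.volume a b :=
    fun a b => hFc.intervalIntegrable a b
  have him : IntervalIntegrable (fun t => dm t * F t) MeasureTheory.volume 0 1 :=
    (hdmcont.mul hFc.continuousOn).intervalIntegrable
  have hip : IntervalIntegrable (fun t => dp t * F t) MeasureTheory.volume 0 1 :=
    (hdpcont.mul hFc.continuousOn).intervalIntegrable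
  -- sum of the two derivative integrands is -F
  have hsum : (∫ t in (0:ℝ)..1, dm t * F t) + (∫ t in (0:ℝ)..1, dp t * F t)
      = -∫ t in (0:ℝ)..1, F t := by
    rw [← integral_add him hip, ← integral_neg]
    apply integral_congr
    intro t ht
    have h3 := hs3 t ht
    have : dm t + dp t = -1 := by
      simp only [hdm, hdp]
      field_simp
      ring
    calc dm t * F t + dp t * F t = (dm t + dp t) * F t := by ring
      _ = -F t := by rw [this]; ring
  -- split the big integral
  have hsplit : (∫ x in (-1/2 : ℝ)..(3/2 : ℝ), F x)
      = (∫ x in (-1/2:ℝ)..0, F x) + (∫ x in (0:ℝ)..1, F x) + ∫ x in (1:ℝ)..(3/2), F x := by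
    rw [integral_add_adjacent_intervals (hFi _ _) (hFi _ _),
      integral_add_adjacent_intervals (hFi _ _) (hFi _ _)]
  have e1 : (∫ x in (-1/2:ℝ)..0, F x) = -∫ t in (0:ℝ)..1, dm t * F t := by
    rw [← hintm, hsubm]
    rw [integral_symm]
    norm_num
  have e2 : (∫ x in (1:ℝ)..(3/2), F x) = -∫ t in (0:ℝ)..1, dp t * F t := by
    rw [← hintp, hsubp, integral_symm]
  rw [hsplit, e1, e2]
  linarith [hsum]
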